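/- Let $d \geq 3$, $\gamma \in [0,1]$, and let $l : K \to (0, 1]$ be a continuous function on a compact set $K \subset \mathbb{R}^d$, with $f = \sqrt{l}$. Suppose $\{x_k\}_{k \in \mathcal{I}}$ is a finite collection of points such that the balls $B(x_k, l(x_k))$ cover $K$, at most $N$ of them intersect at any point, and $(1-8\rho) l(x_k) \leq l(x) \leq (1+8\rho) l(x_k)$ on $B(x_k, l(x_k))$ for some $\rho \in (0, 1/8)$. Set $l_k = l(x_k)$, $f_k = \sqrt{l_k}$, $h_k = \hbar/(l_k f_k)$. If $d - 3 - \gamma \geq 0$, then $\sum_{k \in \mathcal{I}} h_k^{1+\gamma-d} f_k^{2\gamma} \leq C\, \hbar^{1+\gamma-d}$ with $C$ depending only on $d$, $\gamma$, $N$, $\rho$, and the measure of a neighborhood of $K$, but not on $\hbar$ or the cardinality of $\mathcal{I}$. -/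

import Mathlib

open Set Metric MeasureTheory

/-- Summation of the local errors in the multiscale argument: with `l_k = l(x_k)`,
`f_k = √l_k`, `h_k = ħ/(l_k f_k)`, and `d - 3 - γ ≥ 0`, one has
`∑_k h_k^{1+γ-d} f_k^{2γ} ≤ C ħ^{1+γ-d}` with `C` independent of `ħ` and of the
covering family. -/
theorem stmt13 {d : ℕ} (hd : 3 ≤ d) (γ : ℝ) (hγ : γ ∈ Icc (0:ℝ) 1)
    (hdγ : 0 ≤ (d:ℝ) - 3 - γ)
    (K : Set (EuclideanSpace ℝ (Fin d))) (hK : IsCompact K)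
    (N : ℕ) (ρ : ℝ) (hρ : ρ ∈ Ioo (0:ℝ) (1/8))
    (l : EuclideanSpace ℝ (Fin d) → ℝ) (hlcont : ContinuousOn l K)
    (hl01 : ∀ x ∈ K, l x ∈ Ioc (0:ℝ) 1) :
    ∃ C : ℝ, ∀ (ι : Type) (_ : Fintype ι) (xk : ι → EuclideanSpace ℝ (Fin d)),
      (∀ k, xk k ∈ K) →
      (K ⊆ ⋃ k, ball (xk k) (l (xk k))) →
      (∀ y : EuclideanSpace ℝ (Fin d), {k | y ∈ ball (xk k) (l (xk k))}.ncard ≤ N) →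
      (∀ k, ∀ x ∈ ball (xk k) (l (xk k)) ∩ K,
        (1 - 8 * ρ) * l (xk k) ≤ l x ∧ l x ≤ (1 + 8 * ρ) * l (xk k)) →
      ∀ hbar ∈ Ioc (0:ℝ) 1,
        ∑ k : ι, (hbar / (l (xk k) * Real.sqrt (l (xk k)))) ^ (1 + γ - (d:ℝ))
            * (Real.sqrt (l (xk k))) ^ (2 * γ)
          ≤ C * hbar ^ (1 + γ - (d:ℝ)) := by
  classical
  set ω : ENNReal := volume (ball (0 : EuclideanSpace ℝ (Fin d)) 1) with hωdef
  have hω0 : ω ≠ 0 := (measure_ball_pos _ _ one_pos).ne'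
  have hωtop : ω ≠ ⊤ := measure_ball_lt_top.ne
  set T : Set (EuclideanSpace ℝ (Fin d)) := cthickening 1 K with hTdef
  have hTfin : volume T ≠ ⊤ := (hK.cthickening).measure_lt_top.ne
  refine ⟨(N : ℝ) * (volume T).toReal / ω.toReal, ?_⟩
  intro ι _ xk hxkK hcover hover hslow hbar hhbar
  have hbar0 : 0 < hbar := hhbar.1
  -- overlap bound in ENNReal
  have key : ∑ k : ι, volume (ball (xk k) (l (xk k))) ≤ (N : ENNReal) * volume T := by
    have h1 : ∀ k : ι, volume (ball (xk k) (l (xk k)))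
        = ∫⁻ y, (ball (xk k) (l (xk k))).indicator (fun _ => (1:ENNReal)) y := by
      intro k
      rw [lintegral_indicator measurableSet_ball, setLIntegral_one]
    calc ∑ k : ι, volume (ball (xk k) (l (xk k)))
        = ∫⁻ y, ∑ k : ι, (ball (xk k) (l (xk k))).indicator (fun _ => (1:ENNReal)) y := by
          rw [lintegral_finset_sum]
          · exact Finset.sum_congr rfl fun k _ => h1 k
          · exact fun k _ => measurable_one.indicator measurableSet_ball
      _ ≤ ∫⁻ y, T.indicator (fun _ => (N : ENNReal)) y := by
          refine lintegral_mono fun y => ?_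
          by_cases hy : ∃ k, y ∈ ball (xk k) (l (xk k))
          · obtain ⟨k0, hk0⟩ := hy
            have hyT : y ∈ T := by
              refine thickening_subset_cthickening 1 K ?_
              rw [mem_thickening_iff]
              exact ⟨xk k0, hxkK k0,
                lt_of_lt_of_le (mem_ball.1 hk0) (hl01 _ (hxkK k0)).2⟩
            rw [Set.indicator_of_mem hyT]
            have hcard : ∑ k : ι, (ball (xk k) (l (xk k))).indicator
                (fun _ => (1:ENNReal)) y
                = ((Finset.univ.filter fun k => y ∈ ball (xk k) (l (xk k))).card : ENNReal) := by
              simp [Set.indicator_apply, Finset.sum_boole]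
            rw [hcard]
            have : (Finset.univ.filter fun k => y ∈ ball (xk k) (l (xk k))).card ≤ N := by
              have h := hover y
              rwa [Set.ncard_eq_toFinset_card', Set.toFinset_setOf] at h
            exact (Nat.cast_le (α := ENNReal)).2 this
          · push_neg at hy
            have : ∀ k : ι, (ball (xk k) (l (xk k))).indicator
                (fun _ => (1:ENNReal)) y = 0 :=
              fun k => Set.indicator_of_notMem (hy k) _
            simp [this]
      _ = (N : ENNReal) * volume T := by
          rw [lintegral_indicator (isClosed_cthickening.measurableSet),
            setLIntegral_const, mul_comm]
  -- translate to the real sum of l_k^d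
  haveI : Nonempty (Fin d) := ⟨⟨0, by omega⟩⟩
  haveI : Nontrivial (EuclideanSpace ℝ (Fin d)) := by
    refine ⟨0, EuclideanSpace.single ⟨0, by omega⟩ (1:ℝ), ?_⟩
    intro h
    have := congrArg (fun v : EuclideanSpace ℝ (Fin d) => v ⟨0, by omega⟩) h.symm
    simp [EuclideanSpace.single] at this
  have hvol : ∀ k, volume (ball (xk k) (l (xk k)))
      = ENNReal.ofReal ((l (xk k)) ^ d) * ω := by
    intro k
    rw [Measure.addHaar_ball volume _ (hl01 _ (hxkK k)).1.le]
    congr 2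
    rw [finrank_euclideanSpace_fin]
  have hsumd : ∑ k : ι, (l (xk k)) ^ d ≤ (N : ℝ) * (volume T).toReal / ω.toReal := by
    have h2 : (∑ k : ι, ENNReal.ofReal ((l (xk k)) ^ d)) * ω ≤ (N : ENNReal) * volume T := by
      rw [Finset.sum_mul]
      simpa only [hvol] using key
    have h3 : (∑ k : ι, ENNReal.ofReal ((l (xk k)) ^ d))
        ≤ (N : ENNReal) * volume T / ω := (ENNReal.le_div_iff_mul_le (Or.inl hω0) (Or.inl hωtop)).2 h2
    have h4 : ((N : ENNReal) * volume T / ω) ≠ ⊤ := by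
      refine (ENNReal.div_lt_top ?_ hω0).ne
      exact ENNReal.mul_ne_top (ENNReal.natCast_ne_top N) hTfin
    have h5 := ENNReal.toReal_mono h4 h3
    rw [ENNReal.toReal_div, ENNReal.toReal_mul, ENNReal.toReal_natCast] at h5
    rw [ENNReal.toReal_sum (fun k _ => ENNReal.ofReal_ne_top)] at h5
    calc ∑ k : ι, (l (xk k)) ^ d
        = ∑ k : ι, (ENNReal.ofReal ((l (xk k)) ^ d)).toReal := by
          refine Finset.sum_congr rfl fun k _ => ?_
          rw [ENNReal.toReal_ofReal (pow_nonneg (hl01 _ (hxkK k)).1.le d)]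
      _ ≤ (N : ℝ) * (volume T).toReal / ω.toReal := h5
  -- per-term bound
  have hterm : ∀ k : ι,
      (hbar / (l (xk k) * Real.sqrt (l (xk k)))) ^ (1 + γ - (d:ℝ))
        * (Real.sqrt (l (xk k))) ^ (2 * γ)
      ≤ hbar ^ (1 + γ - (d:ℝ)) * (l (xk k)) ^ d := by
    intro k
    have ha0 : 0 < l (xk k) := (hl01 _ (hxkK k)).1
    have ha1 : l (xk k) ≤ 1 := (hl01 _ (hxkK k)).2
    set a := l (xk k) with hadef
    have h32 : a * Real.sqrt a = a ^ ((3:ℝ)/2) := by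
      rw [Real.sqrt_eq_rpow]
      nth_rewrite 1 [← Real.rpow_one a]
      rw [← Real.rpow_add ha0]; norm_num
    have heq : (hbar / (a * Real.sqrt a)) ^ (1 + γ - (d:ℝ))
          * (Real.sqrt a) ^ (2 * γ)
        = hbar ^ (1 + γ - (d:ℝ)) * a ^ ((3*(d:ℝ) - 3 - γ)/2) := by
      rw [h32, Real.sqrt_eq_rpow,
        Real.div_rpow hbar0.le (Real.rpow_nonneg ha0.le _),
        ← Real.rpow_mul ha0.le, ← Real.rpow_mul ha0.le, div_eq_mul_inv,
        ← Real.rpow_neg ha0.le, mul_assoc, ← Real.rpow_add ha0]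
      congr 1
      ring_nf
    rw [heq]
    have hle : a ^ ((3*(d:ℝ) - 3 - γ)/2) ≤ a ^ d := by
      have h1 : a ^ ((3*(d:ℝ) - 3 - γ)/2) ≤ a ^ ((d:ℝ)) :=
        Real.rpow_le_rpow_of_exponent_ge ha0 ha1 (by linarith)
      rwa [Real.rpow_natCast] at h1
    exact mul_le_mul_of_nonneg_left hle (Real.rpow_nonneg hbar0.le _)
  calc ∑ k : ι, (hbar / (l (xk k) * Real.sqrt (l (xk k)))) ^ (1 + γ - (d:ℝ))
          * (Real.sqrt (l (xk k))) ^ (2 * γ)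
      ≤ ∑ k : ι, hbar ^ (1 + γ - (d:ℝ)) * (l (xk k)) ^ d :=
        Finset.sum_le_sum fun k _ => hterm k
    _ = hbar ^ (1 + γ - (d:ℝ)) * ∑ k : ι, (l (xk k)) ^ d := by
        rw [Finset.mul_sum]
    _ ≤ hbar ^ (1 + γ - (d:ℝ)) * ((N : ℝ) * (volume T).toReal / ω.toReal) :=
        mul_le_mul_of_nonneg_left hsumd (Real.rpow_nonneg hbar0.le _)
    _ = (N : ℝ) * (volume T).toReal / ω.toReal * hbar ^ (1 + γ - (d:ℝ)) :=
        mul_comm _ _
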